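/- Let n/2 < t ≤ n, p ∈ (0,1], and let X ~ Bin(t,p), Y ~ Bin(n−t−1,p) be independent. Then P(X ≤ Y) ≤ 2·exp(−((n/2 − t)²/n)·p). -/

import Mathlib

/-- `P(Bin(m,p) = k)`. -/
noncomputable def binPMF (m k : ℕ) (p : ℝ) : ℝ :=
  (m.choose k : ℝ) * p ^ k * (1 - p) ^ (m - k)

lemma binPMF_nonneg (m k : ℕ) (p : ℝ) (h0 : 0 ≤ p) (h1 : p ≤ 1) :
    0 ≤ binPMF m k p := by
  unfold binPMF
  have h2 : (0:ℝ) ≤ 1 - p := by linarith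
  positivity

lemma binSum (m : ℕ) (p c : ℝ) :
    ∑ k ∈ Finset.range (m + 1), binPMF m k p * c ^ k = (1 - p + p * c) ^ m := by
  have h := add_pow (p * c) (1 - p) m
  have he : (1 - p + p * c) = (p * c + (1 - p)) := by ring
  rw [he, h]
  refine Finset.sum_congr rfl fun k _ => ?_
  unfold binPMF
  ring


lemma key_ineq (n t u A B : ℝ) (hn0 : 0 < n) (ht : n / 2 < t) (htr : t ≤ n)
    (hu : u = max (n - t) (n / 4)) (hA0 : 0 < A) (hB0 : 0 < B)
    (hA2 : A ^ 2 = t) (hB2 : B ^ 2 = u) :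
    (n / 2 - t) ^ 2 ≤ n * (A - B) ^ 2 := by
  have hds : (A - B) * (A + B) = t - u := by
    have h : (A - B) * (A + B) = A ^ 2 - B ^ 2 := by ring
    rw [h, hA2, hB2]
  have hA2n : 0 ≤ A ^ 2 := sq_nonneg A
  have hB2n : 0 ≤ B ^ 2 := sq_nonneg B
  rcases le_total (n / 4) (n - t) with h | h
  · have huv : u = n - t := hu.trans (max_eq_left h)
    rw [huv] at hds hB2
    have hS2 : (A + B) ^ 2 ≤ 2 * n := by nlinarith [sq_nonneg (A - B)]
    have h1 : (A - B) ^ 2 * (A + B) ^ 2 = (t - (n - t)) ^ 2 := by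
      rw [← mul_pow, hds]
    have h2 : (A - B) ^ 2 * (A + B) ^ 2 ≤ (A - B) ^ 2 * (2 * n) :=
      mul_le_mul_of_nonneg_left hS2 (sq_nonneg _)
    nlinarith [sq_nonneg (n / 2 - t), sq_nonneg (A - B), hn0.le]
  · have huv : u = n / 4 := hu.trans (max_eq_right h)
    rw [huv] at hds hB2
    have hABsq : (A * B) ^ 2 = t * (n / 4) := by rw [mul_pow, hA2, hB2]
    have hABn : 0 ≤ A * B := (mul_pos hA0 hB0).le
    have hAB : A * B ≤ n / 2 := by nlinarith
    have hS2 : (A + B) ^ 2 ≤ 9 * n / 4 := by nlinarith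
    have h1 : (A - B) ^ 2 * (A + B) ^ 2 = (t - n / 4) ^ 2 := by
      rw [← mul_pow, hds]
    have h2 : (A - B) ^ 2 * (A + B) ^ 2 ≤ (A - B) ^ 2 * (9 * n / 4) :=
      mul_le_mul_of_nonneg_left hS2 (sq_nonneg _)
    have hprod : (0:ℝ) ≤ (n - t) * (5 * t - 2 * n) :=
      mul_nonneg (by linarith) (by linarith)
    nlinarith [sq_nonneg (A - B), hprod, h1, h2]

/-- For `n/2 < t ≤ n` and independent `X ~ Bin(t,p)`, `Y ~ Bin(n−t−1,p)`:
`P(X ≤ Y) ≤ 2·exp(−((n/2−t)²/n)·p)`. -/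
theorem stmt_14 (n t : ℕ) (p : ℝ) (hp0 : 0 < p) (hp1 : p ≤ 1)
    (ht : (n : ℝ) / 2 < t) (htn : t ≤ n) :
    (∑ a ∈ Finset.range (t + 1), ∑ b ∈ Finset.range (n - t - 1 + 1),
        (if a ≤ b then binPMF t a p * binPMF (n - t - 1) b p else 0)) ≤
      2 * Real.exp (-(((n : ℝ) / 2 - t) ^ 2 / n) * p) := by
  set m : ℕ := n - t - 1 with hm
  have htr : (t:ℝ) ≤ n := by exact_mod_cast htn
  have hn0 : (0:ℝ) < n := by linarith
  have hmr : (m:ℝ) ≤ (n:ℝ) - t := by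
    have h1 : m ≤ n - t := Nat.sub_le _ _
    have h2 : ((n - t : ℕ):ℝ) = (n:ℝ) - t := by
      rw [Nat.cast_sub htn]
    calc (m:ℝ) ≤ ((n - t : ℕ):ℝ) := by exact_mod_cast h1
      _ = (n:ℝ) - t := h2
  set u : ℝ := max ((n:ℝ) - t) ((n:ℝ)/4) with hu
  have hu0 : 0 < u := lt_max_of_lt_right (by linarith)
  have hut : u < t := max_lt (by linarith) (by linarith)
  have hmu : (m:ℝ) ≤ u := le_trans hmr (le_max_left _ _)
  obtain ⟨A, hA⟩ : ∃ A : ℝ, A = Real.sqrt t := ⟨_, rfl⟩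
  obtain ⟨B, hB⟩ : ∃ B : ℝ, B = Real.sqrt u := ⟨_, rfl⟩
  have ht0 : (0:ℝ) < t := by linarith
  have hA0 : 0 < A := hA ▸ Real.sqrt_pos.2 ht0
  have hB0 : 0 < B := hB ▸ Real.sqrt_pos.2 hu0
  have hA2 : A ^ 2 = t := hA ▸ Real.sq_sqrt ht0.le
  have hB2 : B ^ 2 = u := hB ▸ Real.sq_sqrt hu0.le
  have hBA : B ≤ A := hA ▸ hB ▸ Real.sqrt_le_sqrt hut.le
  obtain ⟨L, hL⟩ : ∃ L : ℝ, L = B / A := ⟨_, rfl⟩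
  have hL0 : 0 < L := hL ▸ div_pos hB0 hA0
  have hL1 : L ≤ 1 := hL ▸ (div_le_one hA0).2 hBA
  -- Step 1: termwise bound
  have step1 : ∀ a ∈ Finset.range (t + 1), ∀ b ∈ Finset.range (m + 1),
      (if a ≤ b then binPMF t a p * binPMF m b p else 0) ≤
        (binPMF t a p * L ^ a) * (binPMF m b p * (1/L) ^ b) := by
    intro a _ b _
    have hX := binPMF_nonneg t a p hp0.le hp1
    have hY := binPMF_nonneg m b p hp0.le hp1
    by_cases hab : a ≤ b
    · simp only [hab, if_true]
      have hpow : L ^ b ≤ L ^ a := pow_le_pow_of_le_one hL0.le hL1 hab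
      have hLb : 0 < L ^ b := pow_pos hL0 b
      have hone : 1 ≤ L ^ a * (1/L) ^ b := by
        have : (1/L) ^ b = 1 / L ^ b := by rw [one_div, one_div, inv_pow]
        rw [this, mul_one_div, le_div_iff₀ hLb, one_mul]
        exact hpow
      calc binPMF t a p * binPMF m b p
          ≤ (binPMF t a p * binPMF m b p) * (L ^ a * (1/L) ^ b) :=
            le_mul_of_one_le_right (mul_nonneg hX hY) hone
        _ = (binPMF t a p * L ^ a) * (binPMF m b p * (1/L) ^ b) := by ring
    · simp only [hab, if_false]
      have h1 : 0 ≤ L ^ a := pow_nonneg hL0.le a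
      have h2 : 0 ≤ (1/L) ^ b := pow_nonneg (by positivity) b
      positivity
  have step1' : (∑ a ∈ Finset.range (t + 1), ∑ b ∈ Finset.range (m + 1),
        (if a ≤ b then binPMF t a p * binPMF m b p else 0)) ≤
      (∑ a ∈ Finset.range (t + 1), binPMF t a p * L ^ a) *
        (∑ b ∈ Finset.range (m + 1), binPMF m b p * (1/L) ^ b) := by
    rw [Finset.sum_mul_sum]
    exact Finset.sum_le_sum fun a ha => Finset.sum_le_sum fun b hb => step1 a ha b hb
  rw [binSum, binSum] at step1'
  -- Step 2: exponential bounds on the bases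
  have hbase1 : 0 ≤ 1 - p + p * L := by
    have h := mul_pos hp0 hL0
    linarith
  have hbase2 : 0 ≤ 1 - p + p * (1/L) := by
    have : 0 < p * (1/L) := by positivity
    linarith
  have hexp1 : 1 - p + p * L ≤ Real.exp (p * (L - 1)) := by
    have := Real.add_one_le_exp (p * (L - 1))
    linarith [this]
  have hexp2 : 1 - p + p * (1/L) ≤ Real.exp (p * (1/L - 1)) := by
    have := Real.add_one_le_exp (p * (1/L - 1))
    linarith [this]
  have step2 : (1 - p + p * L) ^ t * (1 - p + p * (1/L)) ^ m ≤
      Real.exp ((t:ℝ) * (p * (L - 1)) + (m:ℝ) * (p * (1/L - 1))) := by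
    have h1 : (1 - p + p * L) ^ t ≤ Real.exp (p * (L - 1)) ^ t :=
      pow_le_pow_left₀ hbase1 hexp1 t
    have h2 : (1 - p + p * (1/L)) ^ m ≤ Real.exp (p * (1/L - 1)) ^ m :=
      pow_le_pow_left₀ hbase2 hexp2 m
    calc (1 - p + p * L) ^ t * (1 - p + p * (1/L)) ^ m
        ≤ Real.exp (p * (L - 1)) ^ t * Real.exp (p * (1/L - 1)) ^ m :=
          mul_le_mul h1 h2 (pow_nonneg hbase2 m) (pow_nonneg (Real.exp_pos _).le t)
      _ = Real.exp ((t:ℝ) * (p * (L - 1)) + (m:ℝ) * (p * (1/L - 1))) := by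
          rw [← Real.exp_nat_mul, ← Real.exp_nat_mul, ← Real.exp_add]
  -- Step 3: exponent inequality
  have e1 : (t:ℝ) * L = A * B := by
    rw [← hA2, hL]
    field_simp [hA0.ne']
  have e2 : u / L = A * B := by
    rw [← hB2, hL]
    rw [div_div_eq_mul_div]
    field_simp [hA0.ne', hB0.ne']
  have hid : (t:ℝ) * (L - 1) + u * (1/L - 1) = -(A - B)^2 := by
    have hr : (t:ℝ) * (L - 1) + u * (1/L - 1) = (t:ℝ) * L - t + u / L - u := by
      have hLne : L ≠ 0 := hL0.ne'
      field_simp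
      ring
    rw [hr, e1, e2, ← hA2, ← hB2]; ring
  have hDkey : ((n:ℝ)/2 - t)^2 ≤ (n:ℝ) * (A - B)^2 :=
    key_ineq n t u A B hn0 ht htr hu hA0 hB0 hA2 hB2
  have hinvL : 0 ≤ 1/L - 1 := by
    have : 1 ≤ 1/L := (le_div_iff₀ hL0).2 (by linarith)
    linarith
  have step3 : (t:ℝ) * (p * (L - 1)) + (m:ℝ) * (p * (1/L - 1)) ≤
      -(((n:ℝ)/2 - t)^2 / n) * p := by
    have h1 : (t:ℝ) * (L - 1) + (m:ℝ) * (1/L - 1) ≤ (t:ℝ) * (L - 1) + u * (1/L - 1) :=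
      add_le_add_right (mul_le_mul_of_nonneg_right hmu hinvL) _
    have hdiv : ((n:ℝ)/2 - t)^2 / n ≤ (A - B)^2 := by
      rw [div_le_iff₀ hn0]
      exact hDkey.trans_eq (mul_comm _ _)
    have h2 : (t:ℝ) * (L - 1) + (m:ℝ) * (1/L - 1) ≤ -(((n:ℝ)/2 - t)^2 / n) := by
      rw [hid] at h1
      exact h1.trans (neg_le_neg hdiv)
    calc (t:ℝ) * (p * (L - 1)) + (m:ℝ) * (p * (1/L - 1))
        = ((t:ℝ) * (L - 1) + (m:ℝ) * (1/L - 1)) * p := by ring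
      _ ≤ -(((n:ℝ)/2 - t)^2 / n) * p := mul_le_mul_of_nonneg_right h2 hp0.le
  -- Assemble
  calc (∑ a ∈ Finset.range (t + 1), ∑ b ∈ Finset.range (m + 1),
        (if a ≤ b then binPMF t a p * binPMF m b p else 0))
      ≤ (1 - p + p * L) ^ t * (1 - p + p * (1/L)) ^ m := step1'
    _ ≤ Real.exp ((t:ℝ) * (p * (L - 1)) + (m:ℝ) * (p * (1/L - 1))) := step2
    _ ≤ Real.exp (-(((n:ℝ)/2 - t)^2 / n) * p) := Real.exp_le_exp.2 step3
    _ ≤ 2 * Real.exp (-(((n:ℝ)/2 - t)^2 / n) * p) := by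
        linarith [Real.exp_pos (-(((n:ℝ)/2 - t)^2 / n) * p)]
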